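/- Let r_n(a) = I_{n+1}(a)/I_n(a) be ratios of modified Bessel functions. Then for all a ≥ 0 and n ≥ 0, a/(n + 1 + √(a² + (n+1)²)) ≤ r_n(a) ≤ a/(n + √(a² + (n+2)²)). -/

import Mathlib

open Real MeasureTheory intervalIntegral Filter


noncomputable def Jint (k : ℕ) (n : ℤ) : ℝ := ∫ θ in (0:ℝ)..π, Real.cos θ ^ k * Real.cos (n * θ)

lemma cos_mul_cos' (x y : ℝ) : Real.cos x * Real.cos y = (Real.cos (x + y) + Real.cos (x - y)) / 2 := by
  rw [Real.cos_add, Real.cos_sub]; ring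

lemma Jint_integrable (k : ℕ) (n : ℤ) :
    IntervalIntegrable (fun θ => Real.cos θ ^ k * Real.cos (n * θ)) volume 0 π := by
  apply Continuous.intervalIntegrable; fun_prop

lemma Jint_zero (n : ℤ) (hn : n ≠ 0) : Jint 0 n = 0 := by
  have hc : (n : ℝ) ≠ 0 := Int.cast_ne_zero.mpr hn
  simp only [Jint, pow_zero, one_mul]
  rw [intervalIntegral.integral_comp_mul_left (fun x => Real.cos x) hc]
  simp [Real.sin_int_mul_pi, integral_cos]

lemma Jint_zero_zero : Jint 0 0 = π := by
  simp [Jint]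

lemma Jint_succ (k : ℕ) (n : ℤ) :
    Jint (k + 1) n = (Jint k (n + 1) + Jint k (n - 1)) / 2 := by
  have h : ∀ θ : ℝ, Real.cos θ ^ (k+1) * Real.cos (n * θ)
      = (Real.cos θ ^ k * Real.cos ((n+1) * θ) + Real.cos θ ^ k * Real.cos ((n-1) * θ)) / 2 := by
    intro θ
    have := cos_mul_cos' (n * θ) θ
    have e1 : (n:ℝ) * θ + θ = ((n:ℝ)+1) * θ := by ring
    have e2 : (n:ℝ) * θ - θ = ((n:ℝ)-1) * θ := by ring
    rw [e1, e2] at this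
    push_cast
    rw [pow_succ]
    calc Real.cos θ ^ k * Real.cos θ * Real.cos ((n:ℝ) * θ)
        = Real.cos θ ^ k * (Real.cos ((n:ℝ)*θ) * Real.cos θ) := by ring
      _ = _ := by rw [this]; ring
  simp only [Jint]
  push_cast
  rw [intervalIntegral.integral_congr (g := fun θ => (Real.cos θ ^ k * Real.cos (((n:ℝ)+1) * θ) + Real.cos θ ^ k * Real.cos (((n:ℝ)-1) * θ)) / 2) (fun θ _ => h θ)]
  rw [intervalIntegral.integral_div, intervalIntegral.integral_add
    (by apply Continuous.intervalIntegrable; fun_prop)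
    (by apply Continuous.intervalIntegrable; fun_prop)]

lemma Jint_nonneg (k : ℕ) : ∀ n : ℤ, 0 ≤ Jint k n := by
  induction k with
  | zero => intro n
            rcases eq_or_ne n 0 with h | h
            · rw [h, Jint_zero_zero]; exact Real.pi_pos.le
            · rw [Jint_zero n h]
  | succ k ih => intro n
                 rw [Jint_succ]
                 have := ih (n+1); have := ih (n-1); linarith

lemma Jint_diag (n : ℕ) : π / 2 ^ n ≤ Jint n n := by
  induction n with
  | zero => rw [show ((0:ℕ):ℤ) = 0 by norm_num, Jint_zero_zero]; norm_num
  | succ n ih =>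
      have h := Jint_succ n (n + 1)
      have h2 : ((n:ℤ) + 1 - 1) = (n:ℤ) := by ring
      rw [h2] at h
      have h3 := Jint_nonneg n ((n:ℤ)+1+1)
      push_cast at h ⊢
      rw [h]
      rw [pow_succ]
      have : π / (2^n * 2) = (π / 2^n)/2 := by ring
      rw [this]
      linarith

lemma Jint_le (k : ℕ) (n : ℤ) : Jint k n ≤ π := by
  have : Jint k n ≤ ∫ θ in (0:ℝ)..π, 1 := by
    apply intervalIntegral.integral_mono_on Real.pi_pos.le (Jint_integrable k n) intervalIntegrable_const
    intro x _
    calc Real.cos x ^ k * Real.cos (n * x) ≤ |Real.cos x ^ k * Real.cos (n * x)| := le_abs_self _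
      _ ≤ 1 := by
          rw [abs_mul, abs_pow]
          exact mul_le_one₀ (pow_le_one₀ (abs_nonneg _) (Real.abs_cos_le_one x)) (abs_nonneg _) (Real.abs_cos_le_one _)
  simpa using this

/-- The modified Bessel function of the first kind of integer order `n`,
`I_n(a) = (1/π) ∫_0^π e^{a cos θ} cos(nθ) dθ`. -/
noncomputable def besselI (n : ℕ) (a : ℝ) : ℝ :=
  (1 / π) * ∫ θ in (0 : ℝ)..π, Real.exp (a * Real.cos θ) * Real.cos (n * θ)


lemma exp_tsum (x : ℝ) : ∑' k : ℕ, x ^ k / k.factorial = Real.exp x := by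
  rw [Real.exp_eq_exp_ℝ, NormedSpace.exp_eq_tsum_div]

lemma besselI_eq_tsum (n : ℕ) (a : ℝ) :
    besselI n a = (1 / π) * ∑' k : ℕ, a ^ k / k.factorial * Jint k n := by
  have key : (∫ θ in (0:ℝ)..π, Real.exp (a * Real.cos θ) * Real.cos (n * θ))
      = ∑' k : ℕ, ∫ θ in (0:ℝ)..π, (a * Real.cos θ) ^ k / k.factorial * Real.cos (n * θ) := by
    rw [intervalIntegral.integral_of_le Real.pi_pos.le]
    have := fun k : ℕ => intervalIntegral.integral_of_le (a := (0:ℝ)) (b := π) (μ := volume)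
      (f := fun θ => (a * Real.cos θ) ^ k / k.factorial * Real.cos (n * θ)) Real.pi_pos.le
    simp only [this]
    rw [show (∫ x in Set.Ioc (0:ℝ) π, Real.exp (a * Real.cos x) * Real.cos (n*x) ∂volume)
        = ∫ x in Set.Ioc (0:ℝ) π, (∑' k:ℕ, (a * Real.cos x)^k / k.factorial * Real.cos (n*x)) ∂volume from
      MeasureTheory.setIntegral_congr_fun measurableSet_Ioc (fun θ _ => by
        rw [tsum_mul_right, exp_tsum])]
    refine (MeasureTheory.integral_tsum_of_summable_integral_norm ?_ ?_).symm
    · intro k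
      apply Continuous.integrableOn_Ioc
      fun_prop
    · apply Summable.of_nonneg_of_le (fun k => integral_nonneg (fun θ => norm_nonneg _))
        (f := fun k => |a| ^ k / k.factorial * π)
      · intro k
        have hb : ∀ θ ∈ Set.Ioc (0:ℝ) π, ‖(a * Real.cos θ) ^ k / k.factorial * Real.cos (n * θ)‖
            ≤ |a| ^ k / k.factorial := by
          intro θ _
          have h1 : |a * Real.cos θ| ≤ |a| := by
            rw [abs_mul]
            nlinarith [abs_cos_le_one θ, abs_nonneg a,
              mul_le_mul_of_nonneg_left (abs_cos_le_one θ) (abs_nonneg a)]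
          have h2 : |Real.cos (n * θ)| ≤ 1 := abs_cos_le_one _
          rw [Real.norm_eq_abs, abs_mul, abs_div, abs_pow, Nat.abs_cast]
          calc |a * Real.cos θ| ^ k / (k.factorial : ℝ) * |Real.cos ((n:ℝ) * θ)|
              ≤ |a| ^ k / (k.factorial : ℝ) * 1 := by
                have hk : (0:ℝ) < k.factorial := by positivity
                gcongr
            _ = |a| ^ k / (k.factorial : ℝ) := mul_one _
        calc (∫ θ in Set.Ioc (0:ℝ) π, ‖(a * Real.cos θ) ^ k / k.factorial * Real.cos (n * θ)‖)
            ≤ ∫ _ in Set.Ioc (0:ℝ) π, (|a| ^ k / k.factorial : ℝ) := by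
              apply MeasureTheory.setIntegral_mono_on
              · apply Continuous.integrableOn_Ioc; fun_prop
              · exact integrableOn_const measure_Ioc_lt_top.ne
              · exact measurableSet_Ioc
              · exact hb
          _ = |a| ^ k / k.factorial * π := by
              rw [MeasureTheory.setIntegral_const]
              simp [Real.volume_Ioc, Real.pi_pos.le, smul_eq_mul, mul_comm]
      · exact (Real.summable_pow_div_factorial |a|).mul_right π
  rw [besselI, key]
  congr 1
  apply tsum_congr
  intro k
  rw [Jint, ← intervalIntegral.integral_const_mul]
  apply intervalIntegral.integral_congr
  intro θ _
  push_cast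
  rw [mul_pow]
  ring

lemma term_summable (n : ℕ) (a : ℝ) (ha : 0 ≤ a) :
    Summable (fun k : ℕ => a ^ k / k.factorial * Jint k n) := by
  apply Summable.of_nonneg_of_le
    (fun k => mul_nonneg (by positivity) (Jint_nonneg k n))
    (f := fun k => a ^ k / k.factorial * π)
  · intro k
    exact mul_le_mul_of_nonneg_left (Jint_le k n) (by positivity)
  · exact (Real.summable_pow_div_factorial a).mul_right π

lemma besselI_pos (n : ℕ) (a : ℝ) (ha : 0 < a) : 0 < besselI n a := by
  rw [besselI_eq_tsum]
  apply mul_pos (by positivity)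
  have h1 : a ^ n / n.factorial * Jint n n ≤ ∑' k : ℕ, a ^ k / k.factorial * Jint k n :=
    Summable.le_tsum (term_summable n a ha.le) n
      (fun k _ => mul_nonneg (by positivity) (Jint_nonneg k n))
  have h2 : 0 < a ^ n / n.factorial * Jint n n := by
    apply mul_pos (by positivity)
    calc (0:ℝ) < π / 2 ^ n := by positivity
      _ ≤ Jint n n := Jint_diag n
  linarith


lemma sin_mul_sin' (x y : ℝ) :
    Real.sin x * Real.sin y = (Real.cos (x - y) - Real.cos (x + y)) / 2 := by
  rw [Real.cos_sub, Real.cos_add]; ring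

lemma bessel_rec (n : ℕ) (a : ℝ) :
    2 * ((n:ℝ) + 1) * besselI (n+1) a = a * (besselI n a - besselI (n+2) a) := by
  set c : ℝ := (n:ℝ) + 1 with hc
  have hder : ∀ θ ∈ Set.uIcc (0:ℝ) π,
      HasDerivAt (fun x => Real.exp (a * Real.cos x) * Real.sin (c * x))
        (Real.exp (a * Real.cos θ) * (a * -Real.sin θ) * Real.sin (c * θ)
          + Real.exp (a * Real.cos θ) * (Real.cos (c * θ) * c)) θ := by
    intro θ _
    have h1 : HasDerivAt (fun x : ℝ => a * Real.cos x) (a * -Real.sin θ) θ :=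
      (Real.hasDerivAt_cos θ).const_mul a
    have h2 : HasDerivAt (fun x : ℝ => Real.exp (a * Real.cos x))
        (Real.exp (a * Real.cos θ) * (a * -Real.sin θ)) θ := h1.exp
    have h3 : HasDerivAt (fun x : ℝ => c * x) c θ := by
      simpa using (hasDerivAt_id θ).const_mul c
    have h4 : HasDerivAt (fun x : ℝ => Real.sin (c * x)) (Real.cos (c * θ) * c) θ := h3.sin
    exact h2.mul h4
  have hFTC : (∫ θ in (0:ℝ)..π,
      (Real.exp (a * Real.cos θ) * (a * -Real.sin θ) * Real.sin (c * θ)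
        + Real.exp (a * Real.cos θ) * (Real.cos (c * θ) * c))) = 0 := by
    have hint : IntervalIntegrable (fun θ => Real.exp (a * Real.cos θ) * (a * -Real.sin θ) * Real.sin (c * θ)
        + Real.exp (a * Real.cos θ) * (Real.cos (c * θ) * c)) volume 0 π := by
      apply Continuous.intervalIntegrable; fun_prop
    rw [intervalIntegral.integral_eq_sub_of_hasDerivAt hder hint]
    have hπ : Real.sin (c * π) = 0 := by
      rw [hc]
      have := Real.sin_nat_mul_pi (n+1)
      push_cast at this ⊢
      exact this
    simp [hπ]
  have hsplit : (∫ θ in (0:ℝ)..π,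
      Real.exp (a * Real.cos θ) * (a * -Real.sin θ) * Real.sin (c * θ))
      + (∫ θ in (0:ℝ)..π, Real.exp (a * Real.cos θ) * (Real.cos (c * θ) * c)) = 0 := by
    have i1 : IntervalIntegrable (fun θ => Real.exp (a * Real.cos θ) * (a * -Real.sin θ) * Real.sin (c * θ)) volume 0 π := by
      apply Continuous.intervalIntegrable; fun_prop
    have i2 : IntervalIntegrable (fun θ => Real.exp (a * Real.cos θ) * (Real.cos (c * θ) * c)) volume 0 π := by
      apply Continuous.intervalIntegrable; fun_prop
    rw [← intervalIntegral.integral_add i1 i2]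
    exact hFTC
  have hA : (∫ θ in (0:ℝ)..π,
      Real.exp (a * Real.cos θ) * (a * -Real.sin θ) * Real.sin (c * θ))
      = -(a/2) * (∫ θ in (0:ℝ)..π, Real.exp (a * Real.cos θ) * Real.cos ((n:ℝ) * θ))
        + (a/2) * (∫ θ in (0:ℝ)..π, Real.exp (a * Real.cos θ) * Real.cos (((n:ℝ)+2) * θ)) := by
    have i1 : IntervalIntegrable (fun θ => -(a/2) * (Real.exp (a * Real.cos θ) * Real.cos ((n:ℝ) * θ))) volume 0 π := by
      apply Continuous.intervalIntegrable; fun_prop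
    have i2 : IntervalIntegrable (fun θ => (a/2) * (Real.exp (a * Real.cos θ) * Real.cos (((n:ℝ)+2) * θ))) volume 0 π := by
      apply Continuous.intervalIntegrable; fun_prop
    rw [← intervalIntegral.integral_const_mul, ← intervalIntegral.integral_const_mul,
      ← intervalIntegral.integral_add i1 i2]
    apply intervalIntegral.integral_congr
    intro θ _
    have hs := sin_mul_sin' (c * θ) θ
    have e1 : c * θ - θ = (n:ℝ) * θ := by rw [hc]; ring
    have e2 : c * θ + θ = ((n:ℝ) + 2) * θ := by rw [hc]; ring
    rw [e1, e2] at hs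
    have : Real.sin θ * Real.sin (c * θ)
        = (Real.cos ((n:ℝ)*θ) - Real.cos (((n:ℝ)+2)*θ)) / 2 := by
      rw [← hs]; ring
    simp only []
    linear_combination (-a * Real.exp (a * Real.cos θ)) * this
  have hB : (∫ θ in (0:ℝ)..π, Real.exp (a * Real.cos θ) * (Real.cos (c * θ) * c))
      = c * (∫ θ in (0:ℝ)..π, Real.exp (a * Real.cos θ) * Real.cos ((c:ℝ) * θ)) := by
    rw [← intervalIntegral.integral_const_mul]
    apply intervalIntegral.integral_congr
    intro θ _
    ring
  rw [hA, hB] at hsplit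
  have hb1 : besselI (n+1) a = (1/π) * ∫ θ in (0:ℝ)..π, Real.exp (a * Real.cos θ) * Real.cos (c * θ) := by
    rw [besselI, hc]; push_cast; ring_nf
  have hb0 : besselI n a = (1/π) * ∫ θ in (0:ℝ)..π, Real.exp (a * Real.cos θ) * Real.cos ((n:ℝ) * θ) := rfl
  have hb2 : besselI (n+2) a = (1/π) * ∫ θ in (0:ℝ)..π, Real.exp (a * Real.cos θ) * Real.cos (((n:ℝ)+2) * θ) := by
    rw [besselI]; push_cast; ring_nf
  have hπ : (π:ℝ) ≠ 0 := Real.pi_ne_zero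
  rw [hb1, hb0, hb2]
  linear_combination (2/π) * hsplit


noncomputable def rr (a : ℝ) (m : ℕ) : ℝ := besselI (m+1) a / besselI m a
noncomputable def FF (a : ℝ) (m : ℕ) : ℝ := a / ((m:ℝ) + 1 + Real.sqrt (a^2 + ((m:ℝ)+1)^2))
noncomputable def GG (a : ℝ) (m : ℕ) : ℝ := a / ((m:ℝ) + Real.sqrt (a^2 + ((m:ℝ)+2)^2))

noncomputable def BB (a : ℝ) : ℕ → ℕ → ℝ
  | m, 0 => a / (2*((m:ℝ)+1))
  | m, (k+1) => (a / (2*((m:ℝ)+1)))^2 * BB a (m+1) k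

section
variable {a : ℝ} (ha : 0 < a)
include ha

lemma sqrt_lb (t : ℝ) (ht : 0 ≤ t) : t ≤ Real.sqrt (a^2 + t^2) := by
  calc t = Real.sqrt (t^2) := (Real.sqrt_sq ht).symm
    _ ≤ _ := Real.sqrt_le_sqrt (by nlinarith)

lemma sqrt_sq'' (t : ℝ) : Real.sqrt (a^2 + t^2) ^ 2 = a^2 + t^2 :=
  Real.sq_sqrt (by positivity)

lemma FF_pos (m : ℕ) : 0 < FF a m := by
  have h := sqrt_lb ha ((m:ℝ)+1) (by positivity)
  apply div_pos ha
  nlinarith [Nat.cast_nonneg (α := ℝ) m]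

lemma GG_pos (m : ℕ) : 0 < GG a m := by
  have h := sqrt_lb ha ((m:ℝ)+2) (by positivity)
  apply div_pos ha
  nlinarith [Nat.cast_nonneg (α := ℝ) m]

lemma rr_pos (m : ℕ) : 0 < rr a m :=
  div_pos (besselI_pos _ _ ha) (besselI_pos _ _ ha)

lemma rr_identity (m : ℕ) : rr a m * (2*((m:ℝ)+1) + a * rr a (m+1)) = a := by
  have h0 := besselI_pos m a ha
  have h1 := besselI_pos (m+1) a ha
  have h2 := besselI_pos (m+2) a ha
  have hrec := bessel_rec m a
  rw [rr, rr]
  field_simp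
  push_cast at hrec ⊢
  nlinarith [hrec]

lemma rr_eq (m : ℕ) : rr a m = a / (2*((m:ℝ)+1) + a * rr a (m+1)) := by
  have h := rr_identity ha m
  have hd : 0 < 2*((m:ℝ)+1) + a * rr a (m+1) := by
    have := rr_pos ha (m+1)
    have : 0 ≤ a * rr a (m+1) := by positivity
    positivity
  field_simp
  linarith [h]

lemma alg_fix (t : ℝ) (ht : 0 < t) :
    a / (t + Real.sqrt (a^2+t^2)) * (2*t + a * (a / (t + Real.sqrt (a^2+t^2)))) = a := by
  have hs2 : (Real.sqrt (a^2+t^2))^2 = a^2+t^2 := sqrt_sq'' ha t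
  have hts : t ≤ Real.sqrt (a^2+t^2) := sqrt_lb ha t ht.le
  set s := Real.sqrt (a^2+t^2) with hs
  have hden : 0 < t + s := by linarith
  rw [div_mul_eq_mul_div, div_eq_iff hden.ne']
  field_simp
  linear_combination (-1) * hs2

lemma alg_G (t : ℝ) (ht : 0 < t) :
    2*(t-1) + a * (a / (t + Real.sqrt (a^2+t^2))) = (t-2) + Real.sqrt (a^2+t^2) := by
  have hs2 : (Real.sqrt (a^2+t^2))^2 = a^2+t^2 := sqrt_sq'' ha t
  have hts : t ≤ Real.sqrt (a^2+t^2) := sqrt_lb ha t ht.le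
  set s := Real.sqrt (a^2+t^2) with hs
  have hden : 0 < t + s := by linarith
  field_simp
  linear_combination -hs2

lemma FF_fix (m : ℕ) : FF a m * (2*((m:ℝ)+1) + a * FF a m) = a := by
  rw [FF]
  exact alg_fix ha ((m:ℝ)+1) (by positivity)

lemma FF_eq (m : ℕ) : FF a m = a / (2*((m:ℝ)+1) + a * FF a m) := by
  have h := FF_fix ha m
  have hF := FF_pos ha m
  have hd : 0 < 2*((m:ℝ)+1) + a * FF a m := by positivity
  field_simp
  linarith [h]

lemma GG_eq (m : ℕ) : GG a m = a / (2*((m:ℝ)+1) + a * FF a (m+1)) := by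
  have h := alg_G ha ((m:ℝ)+2) (by positivity)
  rw [GG, FF]
  push_cast
  rw [show ((m:ℝ)+1+1) = (m:ℝ)+2 by ring]
  congr 1
  linarith [h]
lemma GG_le_FF (m : ℕ) : GG a (m+1) ≤ FF a m := by
  rw [GG, FF]
  push_cast
  have h1 : (m:ℝ) + 1 ≤ Real.sqrt (a^2 + ((m:ℝ)+1)^2) := sqrt_lb ha _ (by positivity)
  have h3 : Real.sqrt (a^2 + ((m:ℝ)+1)^2) ≤ Real.sqrt (a^2 + ((m:ℝ)+1+2)^2) := by
    apply Real.sqrt_le_sqrt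
    nlinarith [Nat.cast_nonneg (α := ℝ) m]
  apply div_le_div_of_nonneg_left ha.le (by nlinarith [Nat.cast_nonneg (α := ℝ) m]) (by linarith)

lemma FF_le_B0 (m : ℕ) : FF a m ≤ a / (2*((m:ℝ)+1)) := by
  rw [FF]
  have h1 : (m:ℝ) + 1 ≤ Real.sqrt (a^2 + ((m:ℝ)+1)^2) := sqrt_lb ha _ (by positivity)
  apply div_le_div_of_nonneg_left ha.le (by positivity) (by linarith)

lemma rr_le_B0 (m : ℕ) : rr a m ≤ a / (2*((m:ℝ)+1)) := by
  rw [rr_eq ha m]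
  have hr := rr_pos ha (m+1)
  apply div_le_div_of_nonneg_left ha.le (by positivity) (by nlinarith)

lemma BB_nonneg (k : ℕ) : ∀ m, 0 ≤ BB a m k := by
  induction k with
  | zero => intro m; rw [BB]; positivity
  | succ k ih => intro m; rw [BB]; exact mul_nonneg (by positivity) (ih (m+1))

omit ha in
lemma div_gap (u x y : ℝ) (ha' : 0 ≤ a) (hu : 0 < u) (hux : u ≤ x) (huy : u ≤ y) (h : x ≤ y) :
    a / x - a / y ≤ a * (y - x) / u^2 := by
  have hx : 0 < x := lt_of_lt_of_le hu hux
  have hy : 0 < y := lt_of_lt_of_le hu huy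
  have e : a/x - a/y = a*(y-x)/(x*y) := by field_simp
  rw [e]
  apply div_le_div_of_nonneg_left (by nlinarith) (by positivity)
  nlinarith

lemma main_ind : ∀ k m, FF a m - BB a m k ≤ rr a m ∧ rr a m ≤ GG a m + BB a m k := by
  intro k
  induction k with
  | zero =>
    intro m
    constructor
    · have h1 := FF_le_B0 ha m
      have h2 := rr_pos ha m
      rw [BB]
      linarith
    · have h1 := rr_le_B0 ha m
      have h2 := GG_pos ha m
      rw [BB]
      linarith
  | succ k ih =>
    intro m
    obtain ⟨ihl, ihu⟩ := ih (m+1)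
    set δ := BB a (m+1) k with hδdef
    have hδ : 0 ≤ δ := BB_nonneg ha k (m+1)
    have hu : (0:ℝ) < 2*((m:ℝ)+1) := by positivity
    have hrp := rr_pos ha (m+1)
    have hBB : BB a m (k+1) = a^2 * (a * δ) / (2*((m:ℝ)+1))^2 / a := by
      rw [BB, ← hδdef]
      field_simp
    have hBB' : BB a m (k+1) = a * (a * δ) / (2*((m:ℝ)+1))^2 := by
      rw [BB, ← hδdef]; field_simp
    set D := 2*((m:ℝ)+1) + a * rr a (m+1) with hD
    have hDpos : (2*((m:ℝ)+1)) ≤ D := by nlinarith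
    have hre : rr a m = a / D := rr_eq ha m
    constructor
    · -- lower bound
      set DF := 2*((m:ℝ)+1) + a * FF a m with hDF
      have hFpos := FF_pos ha m
      have hDFu : 2*((m:ℝ)+1) ≤ DF := by nlinarith
      have hGF := GG_le_FF ha m
      -- D ≤ DF + a * δ
      have hDle : D ≤ DF + a * δ := by
        have : rr a (m+1) ≤ FF a m + δ := by linarith
        have := mul_le_mul_of_nonneg_left this ha.le
        rw [hD, hDF]; linarith
      have h2 : a / DF - a / (DF + a*δ) ≤ a * ((DF + a*δ) - DF) / (2*((m:ℝ)+1))^2 :=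
        div_gap (2*((m:ℝ)+1)) DF (DF + a*δ) ha.le hu hDFu (by nlinarith) (by nlinarith)
      have h3 : a / (DF + a*δ) ≤ a / D :=
        div_le_div_of_nonneg_left ha.le (by nlinarith) hDle
      have hFe := FF_eq ha m
      rw [hre, ← hDF] at *
      rw [hFe, ← hDF]
      calc a / DF - BB a m (k+1) = a / DF - a * (a*δ) / (2*((m:ℝ)+1))^2 := by rw [hBB']
        _ ≤ a / (DF + a*δ) := by
            have : (DF + a*δ) - DF = a*δ := by ring
            rw [this] at h2
            linarith
        _ ≤ a / D := h3
    · -- upper bound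
      set DG := 2*((m:ℝ)+1) + a * FF a (m+1) with hDG
      have hFpos := FF_pos ha (m+1)
      have hDGu : 2*((m:ℝ)+1) ≤ DG := by nlinarith
      have hGe := GG_eq ha m
      rw [hre, hGe, ← hDG, hBB']
      rcases le_or_gt (FF a (m+1)) δ with hcase | hcase
      · -- δ ≥ FF (m+1)
        have h1 : a / D ≤ a / (2*((m:ℝ)+1)) :=
          div_le_div_of_nonneg_left ha.le hu hDpos
        have h2 : a / (2*((m:ℝ)+1)) - a / DG ≤ a * (DG - 2*((m:ℝ)+1)) / (2*((m:ℝ)+1))^2 :=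
          div_gap (2*((m:ℝ)+1)) _ _ ha.le hu le_rfl hDGu hDGu
        have h3 : DG - 2*((m:ℝ)+1) = a * FF a (m+1) := by rw [hDG]; ring
        have h4 : a * (a * FF a (m+1)) / (2*((m:ℝ)+1))^2 ≤ a * (a * δ) / (2*((m:ℝ)+1))^2 := by
          apply div_le_div_of_nonneg_right _ (by positivity)
          nlinarith
        rw [h3] at h2
        linarith
      · -- δ < FF (m+1)
        set D3 := DG - a * δ with hD3
        have hD3u : 2*((m:ℝ)+1) ≤ D3 := by
          have h := mul_le_mul_of_nonneg_left hcase.le ha.le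
          rw [hD3, hDG]
          linarith
        have hDD3 : D3 ≤ D := by
          have h1 : FF a (m+1) - δ ≤ rr a (m+1) := by linarith
          have h2 := mul_le_mul_of_nonneg_left h1 ha.le
          rw [mul_sub] at h2
          rw [hD3, hDG, hD]
          linarith
        have haδ : 0 ≤ a * δ := mul_nonneg ha.le hδ
        have hD3DG : D3 ≤ DG := by rw [hD3]; linarith
        have h1 : a / D ≤ a / D3 :=
          div_le_div_of_nonneg_left ha.le (lt_of_lt_of_le hu hD3u) hDD3
        have h2 : a / D3 - a / DG ≤ a * (DG - D3) / (2*((m:ℝ)+1))^2 :=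
          div_gap (2*((m:ℝ)+1)) D3 DG ha.le hu hD3u hDGu hD3DG
        have h3 : DG - D3 = a * δ := by rw [hD3]; ring
        rw [h3] at h2
        linarith
lemma BB_le_fact : ∀ k m, BB a m k ≤ (a/2) * (a^2/4)^k * ((m.factorial : ℝ)/((m+k).factorial))^2 := by
  intro k
  induction k with
  | zero =>
    intro m
    rw [BB]
    have hm : ((m.factorial : ℝ)) ≠ 0 := Nat.cast_ne_zero.mpr m.factorial_ne_zero
    rw [show m + 0 = m from rfl, div_self hm]
    have : (0:ℝ) < (m:ℝ) + 1 := by positivity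
    calc a / (2*((m:ℝ)+1)) ≤ a / (2*1) := by
          apply div_le_div_of_nonneg_left ha.le (by norm_num)
          have := Nat.cast_nonneg (α := ℝ) m
          linarith
      _ = (a/2) * (a^2/4)^0 * 1^2 := by norm_num
  | succ k ih =>
    intro m
    rw [BB]
    have h1 := ih (m+1)
    have h2 : (0:ℝ) ≤ (a / (2*((m:ℝ)+1)))^2 := sq_nonneg _
    calc (a / (2*((m:ℝ)+1)))^2 * BB a (m+1) k
        ≤ (a / (2*((m:ℝ)+1)))^2 * ((a/2) * (a^2/4)^k * (((m+1).factorial : ℝ)/((m+1+k).factorial))^2) :=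
          mul_le_mul_of_nonneg_left h1 h2
      _ = (a/2) * (a^2/4)^(k+1) * ((m.factorial : ℝ)/((m+(k+1)).factorial))^2 := by
          have e1 : ((m+1).factorial : ℝ) = ((m:ℝ)+1) * (m.factorial : ℝ) := by
            rw [Nat.factorial_succ]; push_cast; ring
          have e2 : (m+1+k) = (m+(k+1)) := by omega
          rw [e1, e2]
          have hm1 : ((m:ℝ)+1) ≠ 0 := by positivity
          have hf : (((m+(k+1)).factorial : ℝ)) ≠ 0 := Nat.cast_ne_zero.mpr (Nat.factorial_ne_zero _)
          field_simp
          ring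

lemma BB_tendsto (m : ℕ) : Filter.Tendsto (fun k => BB a m k) Filter.atTop (nhds 0) := by
  apply squeeze_zero (fun k => BB_nonneg ha k m)
    (g := fun k => ((a/2) * (m.factorial:ℝ)^2) * ((a^2/4)^k / k.factorial))
  · intro k
    have h1 := BB_le_fact ha k m
    have h2 : ((m.factorial : ℝ)/((m+k).factorial))^2 ≤ (m.factorial:ℝ)^2 / k.factorial := by
      rw [div_pow]
      apply div_le_div_of_nonneg_left (by positivity) (by positivity)
      have hk1 : (k.factorial : ℝ) ≤ ((m+k).factorial : ℝ) := by
        exact_mod_cast Nat.factorial_le (by omega)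
      have hk2 : (1:ℝ) ≤ ((m+k).factorial : ℝ) := by
        exact_mod_cast Nat.one_le_iff_ne_zero.mpr (Nat.factorial_ne_zero _)
      calc (k.factorial : ℝ) ≤ ((m+k).factorial : ℝ) := hk1
        _ ≤ ((m+k).factorial : ℝ)^2 := by nlinarith
    calc BB a m k ≤ (a/2) * (a^2/4)^k * ((m.factorial : ℝ)/((m+k).factorial))^2 := h1
      _ ≤ (a/2) * (a^2/4)^k * ((m.factorial:ℝ)^2 / k.factorial) :=
          mul_le_mul_of_nonneg_left h2 (by positivity)
      _ = ((a/2) * (m.factorial:ℝ)^2) * ((a^2/4)^k / k.factorial) := by ring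
  · have := (FloorSemiring.tendsto_pow_div_factorial_atTop (K := ℝ) (a^2/4)).const_mul
      ((a/2) * (m.factorial:ℝ)^2)
    simpa using this

lemma bounds_final (m : ℕ) : FF a m ≤ rr a m ∧ rr a m ≤ GG a m := by
  constructor
  · have h1 : ∀ k, FF a m - BB a m k ≤ rr a m := fun k => (main_ind ha k m).1
    have h2 : Filter.Tendsto (fun k => FF a m - BB a m k) Filter.atTop (nhds (FF a m)) := by
      simpa using tendsto_const_nhds.sub (BB_tendsto ha m)
    exact le_of_tendsto h2 (Filter.Eventually.of_forall h1)
  · have h1 : ∀ k, rr a m ≤ GG a m + BB a m k := fun k => (main_ind ha k m).2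
    have h2 : Filter.Tendsto (fun k => GG a m + BB a m k) Filter.atTop (nhds (GG a m)) := by
      simpa using tendsto_const_nhds.add (BB_tendsto ha m)
    exact ge_of_tendsto h2 (Filter.Eventually.of_forall h1)
end

theorem amos_bounds_bessel_ratio (n : ℕ) (a : ℝ) (ha : 0 ≤ a) :
    a / (n + 1 + Real.sqrt (a ^ 2 + (n + 1) ^ 2)) ≤ besselI (n + 1) a / besselI n a ∧
    besselI (n + 1) a / besselI n a ≤ a / (n + Real.sqrt (a ^ 2 + (n + 2) ^ 2)) := by
  rcases eq_or_lt_of_le ha with h | h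
  · subst h
    have hz : besselI (n+1) 0 = 0 := by
      rw [besselI]
      have he : (∫ θ in (0:ℝ)..π, Real.exp (0 * Real.cos θ) * Real.cos (((n+1 : ℕ):ℝ) * θ))
          = Jint 0 ((n:ℤ)+1) := by
        rw [Jint]
        apply intervalIntegral.integral_congr
        intro θ _
        push_cast
        simp
      rw [he, Jint_zero _ (by omega), mul_zero]
    rw [hz, zero_div]
    constructor <;> simp [zero_div]
  · obtain ⟨h1, h2⟩ := bounds_final h n
    rw [rr, FF, GG] at *
    exact ⟨h1, h2⟩
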